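/- arXiv:2109.09296 — 4 statements merged into one kernel-verified Lean document; each statement's English description precedes it below -/
import Mathlib

section
/- If {τ_α}_{α∈Ω} is a normalized continuous Bessel family for a d-dimensional Hilbert space H, then ∫_Ω ∫_Ω |⟨τ_α, τ_β⟩|² dμ(α) dμ(β) ≥ μ(Ω)²/d. -/
open MeasureTheory
open scoped InnerProductSpace ENNReal

private lemma aux_mul_conj_self (z : ℂ) : z * (starRingEnd ℂ) z = ((‖z‖ ^ 2 : ℝ) : ℂ) := by
  rw [Complex.mul_conj]
  congr 1
  rw [Complex.normSq_eq_norm_sq]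

private lemma aux_meas_conj {Ω : Type*} [MeasurableSpace Ω] {g : Ω → ℂ} (hg : Measurable g) :
    Measurable fun x => (starRingEnd ℂ) (g x) :=
  continuous_star.measurable.comp hg

/-- First-order continuous Welch bound (integral form):
`∫∫ |⟨τ_α, τ_β⟩|² dμ dμ ≥ μ(Ω)²/d` for a normalized continuous Bessel family. -/
theorem stmt_3
    {Ω : Type*} [MeasurableSpace Ω] (μ : Measure Ω)
    {H : Type*} [NormedAddCommGroup H] [InnerProductSpace ℂ H] [FiniteDimensional ℂ H]
    (hd : 0 < Module.finrank ℂ H)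
    (τ : Ω → H) (b : ℝ) (hb : 0 < b)
    (hmeas : ∀ h : H, Measurable fun α => ⟪h, τ α⟫_ℂ)
    (hbessel : ∀ h : H,
      ∫⁻ α, ENNReal.ofReal (‖⟪h, τ α⟫_ℂ‖ ^ 2) ∂μ ≤ ENNReal.ofReal (b * ‖h‖ ^ 2))
    (hnorm : ∀ α, ‖τ α‖ = 1) :
    ∫ α, ∫ β, ‖⟪τ α, τ β⟫_ℂ‖ ^ 2 ∂μ ∂μ
      ≥ (μ Set.univ).toReal ^ 2 / (Module.finrank ℂ H : ℝ) := by
  classical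
  set d := Module.finrank ℂ H with hdd
  let e : OrthonormalBasis (Fin d) ℂ H := stdOrthonormalBasis ℂ H
  set f : Fin d → Ω → ℂ := fun i α => ⟪e i, τ α⟫_ℂ with hf
  have hfmeas : ∀ i, Measurable (f i) := fun i => hmeas (e i)
  have henorm : ∀ i, ‖e i‖ = 1 := fun i => e.orthonormal.1 i
  -- Parseval: ∑ i, ‖f i α‖^2 = 1
  have hsum : ∀ α, ∑ i, ‖f i α‖ ^ 2 = 1 := by
    intro α
    have h1 := e.sum_inner_mul_inner (τ α) (τ α)
    have h2 : ∀ i, ⟪τ α, e i⟫_ℂ * ⟪e i, τ α⟫_ℂ = ((‖f i α‖ ^ 2 : ℝ) : ℂ) := by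
      intro i
      rw [← inner_conj_symm (τ α) (e i), mul_comm]
      exact aux_mul_conj_self (f i α)
    rw [Finset.sum_congr rfl (fun i _ => h2 i)] at h1
    have h3 : ⟪τ α, τ α⟫_ℂ = (1 : ℂ) := by
      rw [inner_self_eq_norm_sq_to_K, hnorm]; norm_num
    rw [h3] at h1
    exact_mod_cast h1
  -- finiteness of μ
  have hfin : μ Set.univ < ∞ := by
    have h0 : ∀ᵐ α ∂μ, (1 : ℝ≥0∞) = ∑ i, ENNReal.ofReal (‖f i α‖ ^ 2) := by
      refine ae_of_all _ fun α => ?_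
      rw [← ENNReal.ofReal_sum_of_nonneg (fun i _ => by positivity), hsum α,
        ENNReal.ofReal_one]
    calc μ Set.univ = ∫⁻ _, (1 : ℝ≥0∞) ∂μ := by simp
      _ = ∫⁻ α, ∑ i, ENNReal.ofReal (‖f i α‖ ^ 2) ∂μ := lintegral_congr_ae h0
      _ = ∑ i, ∫⁻ α, ENNReal.ofReal (‖f i α‖ ^ 2) ∂μ := by
          refine lintegral_finset_sum _ fun i _ => ?_
          exact ((hfmeas i).norm.pow_const 2).ennreal_ofReal
      _ ≤ ∑ i : Fin d, ENNReal.ofReal (b * ‖e i‖ ^ 2) :=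
          Finset.sum_le_sum fun i _ => hbessel (e i)
      _ < ∞ := ENNReal.sum_lt_top.mpr fun i _ => ENNReal.ofReal_lt_top
  haveI : IsFiniteMeasure μ := ⟨hfin⟩
  -- boundedness
  have hfbd : ∀ i α, ‖f i α‖ ≤ 1 := by
    intro i α
    calc ‖f i α‖ ≤ ‖e i‖ * ‖τ α‖ := norm_inner_le_norm _ _
      _ = 1 := by rw [henorm, hnorm, one_mul]
  have hintbd : ∀ (g : Ω → ℂ), Measurable g → (∀ x, ‖g x‖ ≤ 1) → Integrable g μ := by
    intro g hg hbd
    exact ⟨hg.aestronglyMeasurable, HasFiniteIntegral.of_bounded (ae_of_all _ hbd)⟩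
  -- the Gram-type matrix
  set B : Fin d → Fin d → ℂ := fun i j => ∫ β, f i β * (starRingEnd ℂ) (f j β) ∂μ with hB
  have hmul_meas : ∀ i j, Measurable fun β => f i β * (starRingEnd ℂ) (f j β) :=
    fun i j => (hfmeas i).mul (aux_meas_conj (hfmeas j))
  have hmul_bd : ∀ i j β, ‖f i β * (starRingEnd ℂ) (f j β)‖ ≤ 1 := by
    intro i j β
    rw [norm_mul, RCLike.norm_conj]
    exact mul_le_one₀ (hfbd i β) (norm_nonneg _) (hfbd j β)
  have hmul_int : ∀ i j, Integrable (fun β => f i β * (starRingEnd ℂ) (f j β)) μ :=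
    fun i j => hintbd _ (hmul_meas i j) (hmul_bd i j)
  -- expansion of the inner product
  have hexp : ∀ α β, ⟪τ α, τ β⟫_ℂ = ∑ i, (starRingEnd ℂ) (f i α) * f i β := by
    intro α β
    rw [← e.sum_inner_mul_inner (τ α) (τ β)]
    refine Finset.sum_congr rfl fun i _ => ?_
    rw [← inner_conj_symm (τ α) (e i)]
  -- inner integral computation
  have hinner : ∀ α, (∫ β, ‖⟪τ α, τ β⟫_ℂ‖ ^ 2 ∂μ)
      = ∑ i, ∑ j, ((starRingEnd ℂ) (f i α) * f j α * B i j).re := by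
    intro α
    have hzmeas : Measurable fun β => ⟪τ α, τ β⟫_ℂ := hmeas (τ α)
    have hzbd : ∀ β, ‖⟪τ α, τ β⟫_ℂ‖ ≤ 1 := by
      intro β
      calc ‖⟪τ α, τ β⟫_ℂ‖ ≤ ‖τ α‖ * ‖τ β‖ := norm_inner_le_norm _ _
        _ = 1 := by rw [hnorm, hnorm, one_mul]
    have hZint : Integrable (fun β => ⟪τ α, τ β⟫_ℂ * (starRingEnd ℂ) ⟪τ α, τ β⟫_ℂ) μ := by
      refine hintbd _ (hzmeas.mul (aux_meas_conj hzmeas)) fun β => ?_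
      rw [norm_mul, RCLike.norm_conj]
      exact mul_le_one₀ (hzbd β) (norm_nonneg _) (hzbd β)
    have h1 : ∀ β, ‖⟪τ α, τ β⟫_ℂ‖ ^ 2 = (⟪τ α, τ β⟫_ℂ * (starRingEnd ℂ) ⟪τ α, τ β⟫_ℂ).re := by
      intro β
      rw [aux_mul_conj_self, Complex.ofReal_re]
    calc (∫ β, ‖⟪τ α, τ β⟫_ℂ‖ ^ 2 ∂μ)
        = ∫ β, (⟪τ α, τ β⟫_ℂ * (starRingEnd ℂ) ⟪τ α, τ β⟫_ℂ).re ∂μ :=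
          integral_congr_ae (ae_of_all _ fun β => h1 β)
      _ = (∫ β, ⟪τ α, τ β⟫_ℂ * (starRingEnd ℂ) ⟪τ α, τ β⟫_ℂ ∂μ).re := integral_re hZint
      _ = (∑ i, ∑ j, (starRingEnd ℂ) (f i α) * f j α * B i j).re := by
          congr 1
          have hexp2 : ∀ β, ⟪τ α, τ β⟫_ℂ * (starRingEnd ℂ) ⟪τ α, τ β⟫_ℂ
              = ∑ i, ∑ j, (starRingEnd ℂ) (f i α) * f j α *
                  (f i β * (starRingEnd ℂ) (f j β)) := by
            intro β
            rw [hexp α β, map_sum, Finset.sum_mul_sum]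
            refine Finset.sum_congr rfl fun i _ => Finset.sum_congr rfl fun j _ => ?_
            simp only [map_mul, Complex.conj_conj]
            ring
          rw [integral_congr_ae (ae_of_all _ hexp2)]
          rw [integral_finset_sum]
          · refine Finset.sum_congr rfl fun i _ => ?_
            rw [integral_finset_sum]
            · exact Finset.sum_congr rfl fun j _ => integral_const_mul _ _
            · intro j _
              exact (hmul_int i j).const_mul _
          · intro i _
            exact integrable_finset_sum _ fun j _ => (hmul_int i j).const_mul _
      _ = ∑ i, ∑ j, ((starRingEnd ℂ) (f i α) * f j α * B i j).re := by
          rw [Complex.re_sum]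
          exact Finset.sum_congr rfl fun i _ => by rw [Complex.re_sum]
  -- outer integral computation
  have houter : (∫ α, ∫ β, ‖⟪τ α, τ β⟫_ℂ‖ ^ 2 ∂μ ∂μ) = ∑ i, ∑ j, ‖B i j‖ ^ 2 := by
    rw [integral_congr_ae (ae_of_all _ hinner)]
    have hterm_int : ∀ i j, Integrable
        (fun α => (starRingEnd ℂ) (f i α) * f j α * B i j) μ := by
      intro i j
      have : Integrable (fun α => (starRingEnd ℂ) (f i α) * f j α) μ := by
        refine hintbd _ ((aux_meas_conj (hfmeas i)).mul (hfmeas j)) fun α => ?_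
        rw [norm_mul, RCLike.norm_conj]
        exact mul_le_one₀ (hfbd i α) (norm_nonneg _) (hfbd j α)
      exact this.mul_const _
    calc (∫ α, ∑ i, ∑ j, ((starRingEnd ℂ) (f i α) * f j α * B i j).re ∂μ)
        = ∑ i, ∑ j, ∫ α, ((starRingEnd ℂ) (f i α) * f j α * B i j).re ∂μ := by
          rw [integral_finset_sum]
          · exact Finset.sum_congr rfl fun i _ => integral_finset_sum _
              fun j _ => ((hterm_int i j).re)
          · intro i _
            exact integrable_finset_sum _ fun j _ => (hterm_int i j).re
      _ = ∑ i, ∑ j, ‖B i j‖ ^ 2 := by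
          refine Finset.sum_congr rfl fun i _ => Finset.sum_congr rfl fun j _ => ?_
          have h4 : ∫ α, ((starRingEnd ℂ) (f i α) * f j α * B i j).re ∂μ
              = (∫ α, (starRingEnd ℂ) (f i α) * f j α * B i j ∂μ).re :=
            integral_re (hterm_int i j)
          rw [h4]
          have h5 : (∫ α, (starRingEnd ℂ) (f i α) * f j α * B i j ∂μ)
              = (starRingEnd ℂ) (B i j) * B i j := by
            rw [integral_mul_const]
            congr 1
            have h6 : ∀ α, (starRingEnd ℂ) (f i α) * f j α
                = (starRingEnd ℂ) (f i α * (starRingEnd ℂ) (f j α)) := by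
              intro α; simp only [map_mul, Complex.conj_conj]
            rw [integral_congr_ae (ae_of_all _ h6), integral_conj]
          rw [h5, mul_comm, aux_mul_conj_self]
          exact Complex.ofReal_re _
  -- diagonal values
  have hnormint : ∀ i, Integrable (fun α => ‖f i α‖ ^ 2) μ := by
    intro i
    refine ⟨((hfmeas i).norm.pow_const 2).aestronglyMeasurable, ?_⟩
    refine HasFiniteIntegral.of_bounded (C := 1) (ae_of_all _ fun α => ?_)
    rw [Real.norm_eq_abs, abs_of_nonneg (by positivity)]
    calc ‖f i α‖ ^ 2 ≤ 1 ^ 2 := pow_le_pow_left₀ (norm_nonneg _) (hfbd i α) 2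
      _ = 1 := one_pow 2
  set t : Fin d → ℝ := fun i => ∫ α, ‖f i α‖ ^ 2 ∂μ with ht
  have htnonneg : ∀ i, 0 ≤ t i := fun i => integral_nonneg fun α => by positivity
  have hBii : ∀ i, B i i = (t i : ℂ) := by
    intro i
    have h7 : ∀ β, f i β * (starRingEnd ℂ) (f i β) = ((‖f i β‖ ^ 2 : ℝ) : ℂ) :=
      fun β => aux_mul_conj_self (f i β)
    calc B i i = ∫ β, ((‖f i β‖ ^ 2 : ℝ) : ℂ) ∂μ := integral_congr_ae (ae_of_all _ h7)
      _ = ((t i : ℝ) : ℂ) := integral_ofReal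
  have htsum : ∑ i, t i = (μ Set.univ).toReal := by
    rw [ht, ← integral_finset_sum _ fun i _ => hnormint i]
    rw [integral_congr_ae (ae_of_all _ fun α => hsum α)]
    simp
    rfl
  -- final chain
  rw [ge_iff_le, houter]
  have hdiag : ∑ i, t i ^ 2 ≤ ∑ i, ∑ j, ‖B i j‖ ^ 2 := by
    refine Finset.sum_le_sum fun i _ => ?_
    calc t i ^ 2 = ‖B i i‖ ^ 2 := by
          rw [hBii i, Complex.norm_real, Real.norm_eq_abs, abs_of_nonneg (htnonneg i)]
      _ ≤ ∑ j, ‖B i j‖ ^ 2 :=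
          Finset.single_le_sum (f := fun j => ‖B i j‖ ^ 2) (fun j _ => by positivity) (Finset.mem_univ i)
  refine le_trans ?_ hdiag
  rw [div_le_iff₀ (by exact_mod_cast hd)]
  calc (μ Set.univ).toReal ^ 2 = (∑ i, t i) ^ 2 := by rw [htsum]
    _ ≤ (Finset.univ : Finset (Fin d)).card * ∑ i, t i ^ 2 := sq_sum_le_card_mul_sum_sq
    _ = (∑ i, t i ^ 2) * d := by
        rw [Finset.card_univ, Fintype.card_fin]
        ring
end

section
/- Let {τ_α}_{α∈Ω} be a normalized continuous Bessel family for a d-dimensional Hilbert space H, and suppose the diagonal Δ = {(α,α) : α ∈ Ω} is measurable in Ω × Ω. Then sup_{α≠β} |⟨τ_α, τ_β⟩|² ≥ [μ(Ω)²/d − (μ×μ)(Δ)] / (μ×μ)((Ω×Ω)∖Δ). -/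
open MeasureTheory
open scoped InnerProductSpace ENNReal ComplexConjugate

private lemma integral_complex_re' {X : Type*} [MeasurableSpace X] {ν : MeasureTheory.Measure X}
    {f : X → ℂ} (hf : Integrable f ν) :
    ∫ x, (f x).re ∂ν = (∫ x, f x ∂ν).re := by
  simpa [RCLike.re_to_complex] using integral_re (𝕜 := ℂ) hf

private lemma welch_aux
    {Ω : Type*} [MeasurableSpace Ω] (μ : Measure Ω) [IsFiniteMeasure μ]
    {H : Type*} [NormedAddCommGroup H] [InnerProductSpace ℂ H] [FiniteDimensional ℂ H]
    (hd : 0 < Module.finrank ℂ H)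
    (τ : Ω → H)
    (hmeas : ∀ h : H, Measurable fun α => ⟪h, τ α⟫_ℂ)
    (hnorm : ∀ α, ‖τ α‖ = 1)
    (hΔ : MeasurableSet {p : Ω × Ω | p.1 = p.2})
    (hoff : 0 < (μ.prod μ) {p : Ω × Ω | p.1 = p.2}ᶜ)
    (S : ℝ) (hS : ∀ α β : Ω, α ≠ β → ‖⟪τ α, τ β⟫_ℂ‖ ^ 2 ≤ S) :
    ((μ Set.univ).toReal ^ 2 / (Module.finrank ℂ H : ℝ)
          - ((μ.prod μ) {p : Ω × Ω | p.1 = p.2}).toReal)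
        / ((μ.prod μ) {p : Ω × Ω | p.1 = p.2}ᶜ).toReal ≤ S := by
  classical
  set n := Module.finrank ℂ H with hn
  set e : OrthonormalBasis (Fin n) ℂ H := stdOrthonormalBasis ℂ H with he
  set c : Fin n → Ω → ℂ := fun i α => ⟪e i, τ α⟫_ℂ with hc
  have hcmeas : ∀ i, Measurable (c i) := fun i => hmeas (e i)
  have hcbd : ∀ i α, ‖c i α‖ ≤ 1 := by
    intro i α
    have := norm_inner_le_norm (𝕜 := ℂ) (e i) (τ α)
    simpa [hc, hnorm, e.orthonormal.1 i] using this
  -- the inner product expansion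
  have hexp : ∀ α β : Ω, ⟪τ α, τ β⟫_ℂ = ∑ i, conj (c i α) * c i β := by
    intro α β
    rw [← e.sum_inner_mul_inner (τ α) (τ β)]
    congr 1; ext i
    simp only [hc]
    rw [inner_conj_symm]
  set F : Ω × Ω → ℝ := fun p => ‖⟪τ p.1, τ p.2⟫_ℂ‖ ^ 2 with hF
  have hFmeas : Measurable F := by
    have : Measurable fun p : Ω × Ω => ∑ i, conj (c i p.1) * c i p.2 := by
      apply Finset.measurable_sum
      intro i _
      exact ((Complex.continuous_conj.measurable.comp (hcmeas i)).comp measurable_fst).mul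
        ((hcmeas i).comp measurable_snd)
    have heq : F = fun p => ‖∑ i, conj (c i p.1) * c i p.2‖ ^ 2 := by
      funext p; rw [hF]; simp only [hexp]
    rw [heq]
    exact this.norm.pow_const 2
  have hFbd : ∀ p, ‖F p‖ ≤ 1 := by
    intro p
    have h1 : ‖⟪τ p.1, τ p.2⟫_ℂ‖ ≤ 1 := by
      have := norm_inner_le_norm (𝕜 := ℂ) (τ p.1) (τ p.2)
      simpa [hnorm] using this
    rw [hF]
    simp only [Real.norm_eq_abs, abs_pow, abs_norm]
    calc ‖⟪τ p.1, τ p.2⟫_ℂ‖ ^ 2 ≤ 1 ^ 2 := pow_le_pow_left₀ (norm_nonneg _) h1 2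
      _ = 1 := one_pow 2
  have hFint : Integrable F (μ.prod μ) :=
    (integrable_const 1).mono' hFmeas.aestronglyMeasurable
      (Filter.Eventually.of_forall hFbd)
  -- the Gram matrix
  set A : Fin n → Fin n → ℂ := fun i j => ∫ α, conj (c i α) * c j α ∂μ with hA
  have hint2 : ∀ (f g : Ω → ℂ), Measurable f → Measurable g → (∀ x, ‖f x‖ ≤ 1) →
      (∀ x, ‖g x‖ ≤ 1) → Integrable (fun α => f α * g α) μ := by
    intro f g hf hg hbf hbg
    refine (integrable_const 1).mono' (hf.mul hg).aestronglyMeasurable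
      (Filter.Eventually.of_forall fun α => ?_)
    calc ‖f α * g α‖ = ‖f α‖ * ‖g α‖ := norm_mul _ _
      _ ≤ 1 * 1 := mul_le_mul (hbf α) (hbg α) (norm_nonneg _) zero_le_one
      _ = 1 := one_mul 1
  have hintcc : ∀ i j, Integrable (fun α => conj (c i α) * c j α) μ := fun i j =>
    hint2 _ _ (Complex.continuous_conj.measurable.comp (hcmeas i)) (hcmeas j)
      (fun α => by simpa using hcbd i α) (hcbd j)
  -- key 1 : the double integral
  -- integrability of each rank-one term on the product
  have htermint : ∀ i j : Fin n, Integrable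
      (fun p : Ω × Ω => (conj (c i p.1) * c j p.1) * (c i p.2 * conj (c j p.2)))
      (μ.prod μ) := by
    intro i j
    exact (hintcc i j).mul_prod (hint2 _ _ (hcmeas i)
      (Complex.continuous_conj.measurable.comp (hcmeas j)) (hcbd i)
      (fun α => by simpa using hcbd j α))
  have hconjint : ∀ i j : Fin n, ∫ β, c i β * conj (c j β) ∂μ = conj (A i j) := by
    intro i j
    rw [hA, ← integral_conj]
    congr 1; funext β
    simp [mul_comm]
  have key1 : ∫ p, F p ∂(μ.prod μ) = ∑ i, ∑ j, ‖A i j‖ ^ 2 := by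
    have hpoint : ∀ p : Ω × Ω, (F p : ℂ)
        = ∑ i, ∑ j, (conj (c i p.1) * c j p.1) * (c i p.2 * conj (c j p.2)) := by
      intro p
      have h1 : (F p : ℂ) = ⟪τ p.1, τ p.2⟫_ℂ * conj ⟪τ p.1, τ p.2⟫_ℂ := by
        rw [RCLike.mul_conj, hF]; norm_cast
      rw [h1, hexp p.1 p.2, map_sum, Finset.sum_mul_sum]
      refine Finset.sum_congr rfl fun i _ => Finset.sum_congr rfl fun j _ => ?_
      simp only [map_mul, Complex.conj_conj]
      ring
    have hsumint : Integrable (fun p : Ω × Ω =>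
        ∑ i, ∑ j, (conj (c i p.1) * c j p.1) * (c i p.2 * conj (c j p.2))) (μ.prod μ) := by
      apply integrable_finset_sum
      intro i _
      exact integrable_finset_sum _ (fun j _ => htermint i j)
    calc ∫ p, F p ∂(μ.prod μ)
        = ∫ p, ((F p : ℂ)).re ∂(μ.prod μ) := by norm_num
      _ = (∫ p, (F p : ℂ) ∂(μ.prod μ)).re := integral_complex_re' hFint.ofReal
      _ = (∫ p, ∑ i, ∑ j, (conj (c i p.1) * c j p.1) * (c i p.2 * conj (c j p.2))
            ∂(μ.prod μ)).re := by
          congr 1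
          exact integral_congr_ae (Filter.Eventually.of_forall hpoint)
      _ = (∑ i, ∑ j, ∫ p : Ω × Ω, (conj (c i p.1) * c j p.1) * (c i p.2 * conj (c j p.2))
            ∂(μ.prod μ)).re := by
          rw [integral_finset_sum _ (fun i _ => integrable_finset_sum _ (fun j _ => htermint i j))]
          congr 1
          refine Finset.sum_congr rfl (fun i _ => ?_)
          exact integral_finset_sum _ (fun j _ => htermint i j)
      _ = (∑ i, ∑ j, (A i j) * conj (A i j)).re := by
          congr 1
          refine Finset.sum_congr rfl (fun i _ => Finset.sum_congr rfl (fun j _ => ?_))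
          have h := integral_prod_mul (μ := μ) (ν := μ)
            (f := fun α => conj (c i α) * c j α) (g := fun β => c i β * conj (c j β))
          exact h.trans (by rw [hconjint i j])
      _ = ∑ i, ∑ j, ‖A i j‖ ^ 2 := by
          rw [Complex.re_sum]
          refine Finset.sum_congr rfl (fun i _ => ?_)
          rw [Complex.re_sum]
          refine Finset.sum_congr rfl (fun j _ => ?_)
          rw [RCLike.mul_conj]
          norm_cast
  -- key 2 : the trace
  have hsumnorm : ∀ α, ∑ i, ‖c i α‖ ^ 2 = 1 := by
    intro α
    have h := e.sum_inner_mul_inner (τ α) (τ α)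
    rw [inner_self_eq_norm_sq_to_K, hnorm α] at h
    have h2 : ∀ i : Fin n, ⟪τ α, e i⟫_ℂ * ⟪e i, τ α⟫_ℂ = ((‖c i α‖ ^ 2 : ℝ) : ℂ) := by
      intro i
      rw [← inner_conj_symm (τ α) (e i), RCLike.conj_mul]
      push_cast
      rfl
    rw [Finset.sum_congr rfl (fun i _ => h2 i)] at h
    have h3 := congrArg Complex.re h
    rw [Complex.re_sum] at h3
    simp only [Complex.ofReal_re] at h3
    simpa using h3
  have key2 : ∑ i, (A i i).re = (μ Set.univ).toReal := by
    have hAre : ∀ i, (A i i).re = ∫ α, ‖c i α‖ ^ 2 ∂μ := by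
      intro i
      have hAii : A i i = ∫ α, conj (c i α) * c i α ∂μ := rfl
      rw [hAii, ← integral_complex_re' (hintcc i i)]
      refine integral_congr_ae (Filter.Eventually.of_forall fun α => ?_)
      show ((starRingEnd ℂ) (c i α) * c i α).re = ‖c i α‖ ^ 2
      rw [RCLike.conj_mul]
      norm_cast
    rw [Finset.sum_congr rfl (fun i _ => hAre i)]
    have hci : ∀ i : Fin n, Integrable (fun α => ‖c i α‖ ^ 2) μ := by
      intro i
      refine (integrable_const 1).mono' ?_ (Filter.Eventually.of_forall fun α => ?_)
      · exact ((hcmeas i).norm.pow_const 2).aestronglyMeasurable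
      · simp only [Real.norm_eq_abs, abs_pow, abs_norm]
        calc ‖c i α‖ ^ 2 ≤ 1 ^ 2 := pow_le_pow_left₀ (norm_nonneg _) (hcbd i α) 2
          _ = 1 := one_pow 2
    rw [← integral_finset_sum _ (fun i _ => hci i)]
    rw [integral_congr_ae (Filter.Eventually.of_forall fun α => hsumnorm α)]
    simp
    rfl
  -- key 3 : Cauchy-Schwarz
  have key3 : (μ Set.univ).toReal ^ 2 / (n : ℝ) ≤ ∫ p, F p ∂(μ.prod μ) := by
    have hcs : (∑ i, (A i i).re) ^ 2 ≤ (n : ℝ) * ∑ i, (A i i).re ^ 2 := by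
      simpa using sq_sum_le_card_mul_sum_sq (s := (Finset.univ : Finset (Fin n)))
        (f := fun i => (A i i).re)
    have h1 : ∀ i : Fin n, (A i i).re ^ 2 ≤ ‖A i i‖ ^ 2 := by
      intro i
      rw [← sq_abs ((A i i).re)]
      exact pow_le_pow_left₀ (abs_nonneg _) (Complex.abs_re_le_norm _) 2
    have h2 : ∑ i, ‖A i i‖ ^ 2 ≤ ∑ i, ∑ j, ‖A i j‖ ^ 2 :=
      Finset.sum_le_sum (fun i _ => Finset.single_le_sum
        (f := fun j => ‖A i j‖ ^ 2) (fun j _ => sq_nonneg _) (Finset.mem_univ i))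
    have hnpos : (0 : ℝ) < n := by exact_mod_cast hd
    rw [div_le_iff₀ hnpos, key1, key2.symm]
    calc (∑ i, (A i i).re) ^ 2 ≤ (n : ℝ) * ∑ i, (A i i).re ^ 2 := hcs
      _ ≤ (n : ℝ) * ∑ i, ‖A i i‖ ^ 2 := by
          apply mul_le_mul_of_nonneg_left (Finset.sum_le_sum fun i _ => h1 i) hnpos.le
      _ ≤ (n : ℝ) * ∑ i, ∑ j, ‖A i j‖ ^ 2 :=
          mul_le_mul_of_nonneg_left h2 hnpos.le
      _ = (∑ i, ∑ j, ‖A i j‖ ^ 2) * (n : ℝ) := mul_comm _ _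
  -- key 4 : split
  have key4 : ∫ p in {p : Ω × Ω | p.1 = p.2}, F p ∂(μ.prod μ)
      = ((μ.prod μ) {p : Ω × Ω | p.1 = p.2}).toReal := by
    have hFone : Set.EqOn F (fun _ => (1 : ℝ)) {p : Ω × Ω | p.1 = p.2} := by
      intro p hp
      have hp' : p.1 = p.2 := hp
      rw [hF]; simp only
      rw [hp', inner_self_eq_norm_sq_to_K]
      simp [hnorm]
    rw [setIntegral_congr_fun hΔ hFone, setIntegral_const]
    simp
    rfl
  have key5 : ∫ p in {p : Ω × Ω | p.1 = p.2}ᶜ, F p ∂(μ.prod μ)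
      ≤ S * ((μ.prod μ) {p : Ω × Ω | p.1 = p.2}ᶜ).toReal := by
    calc ∫ p in {p : Ω × Ω | p.1 = p.2}ᶜ, F p ∂(μ.prod μ)
        ≤ ∫ _p in {p : Ω × Ω | p.1 = p.2}ᶜ, S ∂(μ.prod μ) := by
          refine setIntegral_mono_on hFint.integrableOn (integrable_const S) hΔ.compl ?_
          intro p hp
          exact hS p.1 p.2 hp
      _ = S * ((μ.prod μ) {p : Ω × Ω | p.1 = p.2}ᶜ).toReal := by
          rw [setIntegral_const, smul_eq_mul, mul_comm]
          rfl
  have hsplit : ∫ p, F p ∂(μ.prod μ)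
      = ∫ p in {p : Ω × Ω | p.1 = p.2}, F p ∂(μ.prod μ)
        + ∫ p in {p : Ω × Ω | p.1 = p.2}ᶜ, F p ∂(μ.prod μ) :=
    (integral_add_compl hΔ hFint).symm
  have hden : 0 < ((μ.prod μ) {p : Ω × Ω | p.1 = p.2}ᶜ).toReal := by
    refine ENNReal.toReal_pos hoff.ne' ?_
    exact ne_top_of_le_ne_top (measure_ne_top _ _) (measure_mono (Set.subset_univ _))
  rw [div_le_iff₀ hden]
  calc (μ Set.univ).toReal ^ 2 / (n : ℝ) - ((μ.prod μ) {p : Ω × Ω | p.1 = p.2}).toReal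
      ≤ ∫ p, F p ∂(μ.prod μ) - ((μ.prod μ) {p : Ω × Ω | p.1 = p.2}).toReal := by
        linarith [key3]
    _ = ∫ p in {p : Ω × Ω | p.1 = p.2}ᶜ, F p ∂(μ.prod μ) := by
        rw [hsplit, key4]; ring
    _ ≤ S * ((μ.prod μ) {p : Ω × Ω | p.1 = p.2}ᶜ).toReal := key5


/-- First order continuous Welch bound:
`sup_{α≠β} |⟨τ_α,τ_β⟩|² ≥ [μ(Ω)²/d − (μ×μ)(Δ)] / (μ×μ)((Ω×Ω)∖Δ)`. -/
theorem stmt_5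
    {Ω : Type*} [MeasurableSpace Ω] (μ : Measure Ω)
    {H : Type*} [NormedAddCommGroup H] [InnerProductSpace ℂ H] [FiniteDimensional ℂ H]
    (hd : 0 < Module.finrank ℂ H)
    (τ : Ω → H) (b : ℝ) (hb : 0 < b)
    (hmeas : ∀ h : H, Measurable fun α => ⟪h, τ α⟫_ℂ)
    (hbessel : ∀ h : H,
      ∫⁻ α, ENNReal.ofReal (‖⟪h, τ α⟫_ℂ‖ ^ 2) ∂μ ≤ ENNReal.ofReal (b * ‖h‖ ^ 2))
    (hnorm : ∀ α, ‖τ α‖ = 1)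
    (hΔ : MeasurableSet {p : Ω × Ω | p.1 = p.2})
    (hoff : 0 < (μ.prod μ) {p : Ω × Ω | p.1 = p.2}ᶜ) :
    sSup {x : ℝ | ∃ α β : Ω, α ≠ β ∧ x = ‖⟪τ α, τ β⟫_ℂ‖ ^ 2}
      ≥ ((μ Set.univ).toReal ^ 2 / (Module.finrank ℂ H : ℝ)
          - ((μ.prod μ) {p : Ω × Ω | p.1 = p.2}).toReal)
        / ((μ.prod μ) {p : Ω × Ω | p.1 = p.2}ᶜ).toReal := by
  classical
  set T : Set ℝ := {x : ℝ | ∃ α β : Ω, α ≠ β ∧ x = ‖⟪τ α, τ β⟫_ℂ‖ ^ 2} with hT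
  set S : ℝ := sSup T with hSdef
  -- there exist distinct points
  have hne : ∃ α β : Ω, α ≠ β := by
    by_contra h
    push_neg at h
    have : {p : Ω × Ω | p.1 = p.2}ᶜ = (∅ : Set (Ω × Ω)) := by
      ext p; simp [h p.1 p.2]
    rw [this] at hoff
    simp at hoff
  -- bounded above by 1
  have hbdd : BddAbove T := by
    refine ⟨1, fun x hx => ?_⟩
    obtain ⟨α, β, -, rfl⟩ := hx
    have h1 : ‖⟪τ α, τ β⟫_ℂ‖ ≤ 1 := by
      have := norm_inner_le_norm (𝕜 := ℂ) (τ α) (τ β)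
      simpa [hnorm] using this
    calc ‖⟪τ α, τ β⟫_ℂ‖ ^ 2 ≤ 1 ^ 2 :=
          pow_le_pow_left₀ (norm_nonneg _) h1 2
      _ = 1 := one_pow 2
  have hS0 : 0 ≤ S := by
    obtain ⟨α, β, hab⟩ := hne
    have hmem : ‖⟪τ α, τ β⟫_ℂ‖ ^ 2 ∈ T := ⟨α, β, hab, rfl⟩
    exact le_trans (by positivity) (le_csSup hbdd hmem)
  set num : ℝ := (μ Set.univ).toReal ^ 2 / (Module.finrank ℂ H : ℝ)
      - ((μ.prod μ) {p : Ω × Ω | p.1 = p.2}).toReal with hnum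
  rcases le_or_gt num 0 with hcase | hcase
  · exact le_trans (div_nonpos_of_nonpos_of_nonneg hcase ENNReal.toReal_nonneg) hS0
  · -- main case: μ is a finite measure
    have hμpos : 0 < (μ Set.univ).toReal := by
      by_contra h
      push_neg at h
      have h0 : (μ Set.univ).toReal = 0 := le_antisymm h ENNReal.toReal_nonneg
      rw [hnum, h0] at hcase
      simp at hcase
      exact absurd hcase (not_lt.2 ENNReal.toReal_nonneg)
    have hμfin : μ Set.univ ≠ ⊤ := by
      intro h; rw [h] at hμpos; simp at hμpos
    haveI : IsFiniteMeasure μ := ⟨lt_top_iff_ne_top.2 hμfin⟩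
    have hS : ∀ α β : Ω, α ≠ β → ‖⟪τ α, τ β⟫_ℂ‖ ^ 2 ≤ S := fun α β h =>
      le_csSup hbdd ⟨α, β, h, rfl⟩
    exact welch_aux μ hd τ hmeas hnorm hΔ hoff S hS
end

section
/- Let {τ_α}_{α∈Ω} be a normalized continuous Bessel family for a d-dimensional Hilbert space H with measurable diagonal Δ in Ω×Ω. Then for every m ∈ ℕ, sup_{α≠β} |⟨τ_α, τ_β⟩|^{2m} ≥ [μ(Ω)²/C(d+m−1,m) − (μ×μ)(Δ)] / (μ×μ)((Ω×Ω)∖Δ). -/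
open MeasureTheory
open scoped InnerProductSpace ENNReal

private lemma welch_bdd_integrable {X : Type*} {E : Type*} [MeasurableSpace X]
    [NormedAddCommGroup E] {ν : Measure X} [IsFiniteMeasure ν] {h : X → E} (c : ℝ)
    (hm : AEStronglyMeasurable h ν) (hb : ∀ x, ‖h x‖ ≤ c) : Integrable h ν :=
  (integrable_const (c : ℝ)).mono' hm (Filter.Eventually.of_forall hb)

private lemma welch_key {Ω : Type*} [MeasurableSpace Ω] (μ : Measure Ω) [IsFiniteMeasure μ]
    (n m : ℕ) (f : Fin n → Ω → ℂ) (hf : ∀ i, Measurable (f i))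
    (hbd : ∀ i α, ‖f i α‖ ≤ 1) (hsum : ∀ α, ∑ i, ‖f i α‖ ^ 2 = 1) :
    (μ Set.univ).toReal ^ 2 ≤ ((n + m - 1).choose m : ℝ) *
      ∫ p : Ω × Ω, ‖∑ i, (starRingEnd ℂ) (f i p.1) * f i p.2‖ ^ (2 * m) ∂(μ.prod μ) := by
  classical
  set g : Ω × Ω → ℂ := fun p => ∑ i, (starRingEnd ℂ) (f i p.1) * f i p.2 with hg
  set F : (Fin m → Fin n) → Ω → ℂ := fun I α => ∏ k, f (I k) α with hF
  set Φ : (Fin m → Fin n) → Sym (Fin n) m :=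
    fun I => ⟨Multiset.map I Finset.univ.val, by simp⟩ with hΦ
  set P : Sym (Fin n) m → Ω → ℂ :=
    fun s α => ((s : Multiset (Fin n)).map (fun i => f i α)).prod with hP
  have hFP : ∀ I α, F I α = P (Φ I) α := by
    intro I α
    simp only [hF, hP, hΦ, Finset.prod_eq_multiset_prod]
    exact congrArg Multiset.prod (Multiset.map_map (fun i => f i α) I Finset.univ.val).symm
  have hF_meas : ∀ I, Measurable (F I) := fun I =>
    Finset.measurable_prod _ (fun k _ => hf (I k))
  have hF_bd : ∀ I α, ‖F I α‖ ≤ 1 := by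
    intro I α
    simp only [hF]
    calc ‖∏ k, f (I k) α‖ = ∏ k, ‖f (I k) α‖ := norm_prod _ _
    _ ≤ ∏ _k : Fin m, 1 := Finset.prod_le_prod (fun _ _ => norm_nonneg _) (fun k _ => hbd _ _)
    _ = 1 := Finset.prod_const_one
  set T : (Fin m → Fin n) → (Fin m → Fin n) → ℂ :=
    fun I J => ∫ α, F I α * (starRingEnd ℂ) (F J α) ∂μ with hT
  set r : Sym (Fin n) m → ℝ := fun s => ∫ α, ‖P s α‖ ^ 2 ∂μ with hr
  -- expansion of powers
  have hzsum : ∀ α β, (∑ i, (starRingEnd ℂ) (f i α) * f i β) ^ m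
      = ∑ I : Fin m → Fin n, (starRingEnd ℂ) (F I α) * F I β := by
    intro α β
    have h1 : (∑ i, (starRingEnd ℂ) (f i α) * f i β) ^ m
        = ∏ _k : Fin m, (∑ i, (starRingEnd ℂ) (f i α) * f i β) := by
      simp [Finset.prod_const]
    rw [h1, Finset.prod_univ_sum, Fintype.piFinset_univ]
    refine Finset.sum_congr rfl fun I _ => ?_
    rw [Finset.prod_mul_distrib, ← map_prod]
  have hpt : ∀ p : Ω × Ω, ((‖g p‖ ^ (2 * m) : ℝ) : ℂ)
      = ∑ I : Fin m → Fin n, ∑ J : Fin m → Fin n,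
          ((starRingEnd ℂ) (F I p.1) * F J p.1) * (F I p.2 * (starRingEnd ℂ) (F J p.2)) := by
    intro p
    have h1 : ((‖g p‖ ^ (2 * m) : ℝ) : ℂ) = g p ^ m * (starRingEnd ℂ) (g p ^ m) := by
      rw [Complex.mul_conj, Complex.normSq_eq_norm_sq, norm_pow]
      push_cast
      ring
    have h2 : g p ^ m = ∑ I : Fin m → Fin n, (starRingEnd ℂ) (F I p.1) * F I p.2 :=
      hzsum p.1 p.2
    have h3 : (starRingEnd ℂ) (g p ^ m)
        = ∑ J : Fin m → Fin n, F J p.1 * (starRingEnd ℂ) (F J p.2) := by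
      rw [h2, map_sum]
      exact Finset.sum_congr rfl fun J _ => by simp [map_mul]
    rw [h1, h3, h2, Finset.sum_mul_sum]
    exact Finset.sum_congr rfl fun I _ => Finset.sum_congr rfl fun J _ => by ring
  -- measurability and integrability
  have hg_meas : Measurable g := by
    apply Finset.measurable_sum
    intro i _
    exact (Complex.continuous_conj.measurable.comp ((hf i).comp measurable_fst)).mul
      ((hf i).comp measurable_snd)
  have hg_bd : ∀ p, ‖g p‖ ≤ (n : ℝ) := by
    intro p
    calc ‖g p‖ ≤ ∑ i, ‖(starRingEnd ℂ) (f i p.1) * f i p.2‖ := norm_sum_le _ _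
    _ ≤ ∑ _i : Fin n, (1 : ℝ) := by
        refine Finset.sum_le_sum fun i _ => ?_
        rw [norm_mul, RCLike.norm_conj]
        exact mul_le_one₀ (hbd _ _) (norm_nonneg _) (hbd _ _)
    _ = (n : ℝ) := by simp
  have hI_int : Integrable (fun p => ‖g p‖ ^ (2 * m)) (μ.prod μ) := by
    refine welch_bdd_integrable ((n : ℝ) ^ (2 * m))
      ((hg_meas.norm.pow_const _).aestronglyMeasurable) (fun p => ?_)
    rw [Real.norm_eq_abs, abs_of_nonneg (by positivity)]
    exact pow_le_pow_left₀ (norm_nonneg _) (hg_bd p) _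
  set Ival : ℝ := ∫ p, ‖g p‖ ^ (2 * m) ∂(μ.prod μ) with hIval
  have hterm_int : ∀ (I J : Fin m → Fin n), Integrable
      (fun p : Ω × Ω => ((starRingEnd ℂ) (F I p.1) * F J p.1)
        * (F I p.2 * (starRingEnd ℂ) (F J p.2))) (μ.prod μ) := by
    intro I J
    refine welch_bdd_integrable 1 (Measurable.aestronglyMeasurable ?_) (fun p => ?_)
    · exact ((Complex.continuous_conj.measurable.comp ((hF_meas I).comp measurable_fst)).mul
        ((hF_meas J).comp measurable_fst)).mul
        (((hF_meas I).comp measurable_snd).mul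
          (Complex.continuous_conj.measurable.comp ((hF_meas J).comp measurable_snd)))
    · rw [norm_mul, norm_mul, norm_mul, RCLike.norm_conj, RCLike.norm_conj]
      have h1 : ‖F I p.1‖ * ‖F J p.1‖ * (‖F I p.2‖ * ‖F J p.2‖) ≤ 1 * 1 * (1 * 1) := by
        gcongr <;> first | exact hF_bd _ _ | exact norm_nonneg _
      linarith
  have hc : (Ival : ℂ) = ∑ I : Fin m → Fin n, ∑ J : Fin m → Fin n,
      (starRingEnd ℂ) (T I J) * T I J := by
    have h0 : ((Ival : ℝ) : ℂ) = ∫ p : Ω × Ω, ((‖g p‖ ^ (2 * m) : ℝ) : ℂ) ∂(μ.prod μ) := by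
      rw [hIval]; exact integral_ofReal.symm
    rw [h0, integral_congr_ae (Filter.Eventually.of_forall hpt)]
    rw [integral_finset_sum _ (fun I _ => integrable_finset_sum _ (fun J _ => hterm_int I J))]
    refine Finset.sum_congr rfl fun I _ => ?_
    rw [integral_finset_sum _ (fun J _ => hterm_int I J)]
    refine Finset.sum_congr rfl fun J _ => ?_
    rw [integral_prod_mul (f := fun x => (starRingEnd ℂ) (F I x) * F J x)
      (g := fun y => F I y * (starRingEnd ℂ) (F J y))]
    congr 1
    rw [hT, ← integral_conj]
    refine integral_congr_ae (Filter.Eventually.of_forall fun α => ?_)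
    simp [mul_comm]
  have hIval_eq : Ival = ∑ I : Fin m → Fin n, ∑ J : Fin m → Fin n, ‖T I J‖ ^ 2 := by
    have hc2 : (Ival : ℂ) = ((∑ I : Fin m → Fin n, ∑ J : Fin m → Fin n, ‖T I J‖ ^ 2 : ℝ) : ℂ) := by
      rw [hc]
      push_cast
      exact Finset.sum_congr rfl fun I _ => Finset.sum_congr rfl fun J _ =>
        (RCLike.conj_mul (T I J))
    exact_mod_cast hc2
  -- trace
  have hFnorm : ∀ α, ∑ I : Fin m → Fin n, ‖F I α‖ ^ 2 = 1 := by
    intro α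
    have h1 : ∀ I : Fin m → Fin n, ‖F I α‖ ^ 2 = ∏ k, ‖f (I k) α‖ ^ 2 := by
      intro I
      simp only [hF]
      rw [norm_prod, ← Finset.prod_pow]
    rw [Finset.sum_congr rfl fun I _ => h1 I]
    have h2 : (∑ i, ‖f i α‖ ^ 2) ^ m = ∑ I : Fin m → Fin n, ∏ k, ‖f (I k) α‖ ^ 2 := by
      have h3 : (∑ i, ‖f i α‖ ^ 2) ^ m = ∏ _k : Fin m, (∑ i, ‖f i α‖ ^ 2) := by
        simp [Finset.prod_const]
      rw [h3, Finset.prod_univ_sum, Fintype.piFinset_univ]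
    rw [← h2, hsum α, one_pow]
  have hrF : ∀ I : Fin m → Fin n, r (Φ I) = ∫ α, ‖F I α‖ ^ 2 ∂μ := by
    intro I
    rw [hr]
    exact integral_congr_ae (Filter.Eventually.of_forall fun α => by simp only [hFP])
  have hsq_int : ∀ I : Fin m → Fin n, Integrable (fun α => ‖F I α‖ ^ 2) μ := by
    intro I
    refine welch_bdd_integrable 1 (((hF_meas I).norm.pow_const _).aestronglyMeasurable)
      (fun α => ?_)
    rw [Real.norm_eq_abs, abs_of_nonneg (by positivity)]
    exact pow_le_one₀ (norm_nonneg _) (hF_bd I α)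
  have htr : ∑ I : Fin m → Fin n, r (Φ I) = (μ Set.univ).toReal := by
    rw [Finset.sum_congr rfl fun I _ => hrF I,
      ← integral_finset_sum _ (fun I _ => hsq_int I)]
    rw [integral_congr_ae (Filter.Eventually.of_forall fun α => hFnorm α)]
    simp
    rfl
  -- values of T on fibers
  have hTdiag : ∀ I J : Fin m → Fin n, Φ J = Φ I → T I J = ((r (Φ I) : ℝ) : ℂ) := by
    intro I J hIJ
    have h0 : ((r (Φ I) : ℝ) : ℂ) = ∫ α, ((‖P (Φ I) α‖ ^ 2 : ℝ) : ℂ) ∂μ := by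
      rw [hr]; exact integral_ofReal.symm
    rw [hT, h0]
    refine integral_congr_ae (Filter.Eventually.of_forall fun α => ?_)
    show F I α * (starRingEnd ℂ) (F J α) = _
    rw [hFP I α, hFP J α, hIJ, Complex.mul_conj, Complex.normSq_eq_norm_sq]
  -- weights
  set w : Sym (Fin n) m → ℕ :=
    fun s => (Finset.univ.filter (fun I : Fin m → Fin n => Φ I = s)).card with hw
  have hw_pos : ∀ I : Fin m → Fin n, 0 < w (Φ I) := by
    intro I
    rw [hw]
    exact Finset.card_pos.2 ⟨I, Finset.mem_filter.2 ⟨Finset.mem_univ I, rfl⟩⟩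
  have hsum_inv : ∑ I : Fin m → Fin n, (1 / (w (Φ I) : ℝ)) ≤ ((n + m - 1).choose m : ℝ) := by
    rw [Finset.sum_comp (fun s => 1 / (w s : ℝ)) Φ]
    have h1 : ∀ s ∈ Finset.univ.image Φ,
        ((Finset.univ.filter (fun I : Fin m → Fin n => Φ I = s)).card : ℕ) • (1 / (w s : ℝ))
          = 1 := by
      intro s hs
      obtain ⟨I, _, rfl⟩ := Finset.mem_image.1 hs
      rw [nsmul_eq_mul]
      have := hw_pos I
      rw [show (Finset.univ.filter (fun J : Fin m → Fin n => Φ J = Φ I)).card = w (Φ I) from rfl]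
      field_simp
    rw [Finset.sum_congr rfl h1, Finset.sum_const, nsmul_eq_mul, mul_one]
    have h2 : (Finset.univ.image Φ).card ≤ Fintype.card (Sym (Fin n) m) :=
      Finset.card_le_univ _
    have h3 : Fintype.card (Sym (Fin n) m) = (n + m - 1).choose m := by
      rw [Sym.card_sym_eq_choose, Fintype.card_fin]
    calc ((Finset.univ.image Φ).card : ℝ) ≤ (Fintype.card (Sym (Fin n) m) : ℝ) := by
          exact_mod_cast h2
    _ = ((n + m - 1).choose m : ℝ) := by rw [h3]
  have hr_nonneg : ∀ s, 0 ≤ r s := fun s => integral_nonneg fun α => by positivity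
  have hquad : ∑ I : Fin m → Fin n, (w (Φ I) : ℝ) * r (Φ I) ^ 2 ≤ Ival := by
    rw [hIval_eq]
    refine Finset.sum_le_sum fun I _ => ?_
    have h1 : (w (Φ I) : ℝ) * r (Φ I) ^ 2
        = ∑ J ∈ Finset.univ.filter (fun J : Fin m → Fin n => Φ J = Φ I), ‖T I J‖ ^ 2 := by
      have h2 : ∀ J ∈ Finset.univ.filter (fun J : Fin m → Fin n => Φ J = Φ I),
          ‖T I J‖ ^ 2 = r (Φ I) ^ 2 := by
        intro J hJ
        rw [hTdiag I J (Finset.mem_filter.1 hJ).2, Complex.norm_real, Real.norm_eq_abs, sq_abs]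
      rw [Finset.sum_congr rfl h2, Finset.sum_const, nsmul_eq_mul]
    rw [h1]
    exact Finset.sum_le_sum_of_subset_of_nonneg (Finset.subset_univ _)
      (fun J _ _ => sq_nonneg _)
  -- Cauchy-Schwarz
  have cs := Finset.sum_mul_sq_le_sq_mul_sq Finset.univ
    (fun I : Fin m → Fin n => 1 / Real.sqrt (w (Φ I)))
    (fun I : Fin m → Fin n => Real.sqrt (w (Φ I)) * r (Φ I))
  have hws : ∀ I : Fin m → Fin n, Real.sqrt (w (Φ I)) ≠ 0 := by
    intro I
    refine ne_of_gt (Real.sqrt_pos.2 ?_)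
    exact_mod_cast hw_pos I
  have hcs1 : ∀ I : Fin m → Fin n,
      (1 / Real.sqrt (w (Φ I))) * (Real.sqrt (w (Φ I)) * r (Φ I)) = r (Φ I) := by
    intro I
    rw [one_div, inv_mul_cancel_left₀ (hws I)]
  have hcs2 : ∀ I : Fin m → Fin n, (1 / Real.sqrt (w (Φ I))) ^ 2 = 1 / (w (Φ I) : ℝ) := by
    intro I
    rw [div_pow, one_pow, Real.sq_sqrt (Nat.cast_nonneg _)]
  have hcs3 : ∀ I : Fin m → Fin n,
      (Real.sqrt (w (Φ I)) * r (Φ I)) ^ 2 = (w (Φ I) : ℝ) * r (Φ I) ^ 2 := by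
    intro I
    rw [mul_pow, Real.sq_sqrt (Nat.cast_nonneg _)]
  rw [Finset.sum_congr rfl fun I _ => hcs1 I, Finset.sum_congr rfl fun I _ => hcs2 I,
    Finset.sum_congr rfl fun I _ => hcs3 I, htr] at cs
  have hq_nonneg : (0:ℝ) ≤ ∑ I : Fin m → Fin n, (w (Φ I) : ℝ) * r (Φ I) ^ 2 :=
    Finset.sum_nonneg fun I _ => mul_nonneg (Nat.cast_nonneg _) (sq_nonneg _)
  calc (μ Set.univ).toReal ^ 2
      ≤ (∑ I : Fin m → Fin n, 1 / (w (Φ I) : ℝ))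
        * ∑ I : Fin m → Fin n, (w (Φ I) : ℝ) * r (Φ I) ^ 2 := cs
  _ ≤ ((n + m - 1).choose m : ℝ) * Ival := by
      refine mul_le_mul hsum_inv hquad hq_nonneg ?_
      positivity

/-- Higher order continuous Welch bounds:
`sup_{α≠β} |⟨τ_α,τ_β⟩|^{2m} ≥ [μ(Ω)²/C(d+m−1,m) − (μ×μ)(Δ)] / (μ×μ)((Ω×Ω)∖Δ)`. -/
theorem stmt_7
    {Ω : Type*} [MeasurableSpace Ω] (μ : Measure Ω)
    {H : Type*} [NormedAddCommGroup H] [InnerProductSpace ℂ H] [FiniteDimensional ℂ H]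
    (hd : 0 < Module.finrank ℂ H)
    (τ : Ω → H) (b : ℝ) (hb : 0 < b)
    (hmeas : ∀ h : H, Measurable fun α => ⟪h, τ α⟫_ℂ)
    (hbessel : ∀ h : H,
      ∫⁻ α, ENNReal.ofReal (‖⟪h, τ α⟫_ℂ‖ ^ 2) ∂μ ≤ ENNReal.ofReal (b * ‖h‖ ^ 2))
    (hnorm : ∀ α, ‖τ α‖ = 1)
    (hΔ : MeasurableSet {p : Ω × Ω | p.1 = p.2})
    (hoff : 0 < (μ.prod μ) {p : Ω × Ω | p.1 = p.2}ᶜ)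
    (m : ℕ) (hm : 1 ≤ m) :
    sSup {x : ℝ | ∃ α β : Ω, α ≠ β ∧ x = ‖⟪τ α, τ β⟫_ℂ‖ ^ (2 * m)}
      ≥ ((μ Set.univ).toReal ^ 2 / ((Module.finrank ℂ H + m - 1).choose m : ℝ)
          - ((μ.prod μ) {p : Ω × Ω | p.1 = p.2}).toReal)
        / ((μ.prod μ) {p : Ω × Ω | p.1 = p.2}ᶜ).toReal := by
  classical
  set d := Module.finrank ℂ H with hdim
  set e : OrthonormalBasis (Fin d) ℂ H := stdOrthonormalBasis ℂ H with he
  set f : Fin d → Ω → ℂ := fun i α => ⟪e i, τ α⟫_ℂ with hfdef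
  have hf_meas : ∀ i, Measurable (f i) := fun i => hmeas (e i)
  have henorm : ∀ i : Fin d, ‖e i‖ = 1 := fun i => e.orthonormal.1 i
  have hf_bd : ∀ i α, ‖f i α‖ ≤ 1 := by
    intro i α
    calc ‖f i α‖ ≤ ‖e i‖ * ‖τ α‖ := norm_inner_le_norm _ _
    _ = 1 := by rw [hnorm α, henorm i, one_mul]
  have hparseval : ∀ α, ∑ i, ‖f i α‖ ^ 2 = 1 := by
    intro α
    have h := e.sum_inner_mul_inner (τ α) (τ α)
    have h2 : ∀ i : Fin d, ⟪τ α, e i⟫_ℂ * ⟪e i, τ α⟫_ℂ = ((‖f i α‖ ^ 2 : ℝ) : ℂ) := by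
      intro i
      rw [show ⟪e i, τ α⟫_ℂ = f i α from rfl,
        show ⟪τ α, e i⟫_ℂ = (starRingEnd ℂ) (f i α) from (inner_conj_symm (τ α) (e i)).symm,
        mul_comm, Complex.mul_conj, Complex.normSq_eq_norm_sq]
    rw [Finset.sum_congr rfl (fun i _ => h2 i), inner_self_eq_norm_sq_to_K, hnorm α] at h
    have h7 := congrArg Complex.re h
    simpa [← Complex.ofReal_pow] using h7
  have hexp : ∀ α β, ⟪τ α, τ β⟫_ℂ = ∑ i, (starRingEnd ℂ) (f i α) * f i β := by
    intro α β
    rw [← e.sum_inner_mul_inner (τ α) (τ β)]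
    refine Finset.sum_congr rfl fun i _ => ?_
    rw [show ⟪τ α, e i⟫_ℂ = (starRingEnd ℂ) (f i α) from (inner_conj_symm (τ α) (e i)).symm]
  haveI : IsFiniteMeasure μ := by
    constructor
    have h1 : ∀ α, (1 : ℝ≥0∞) = ∑ i, ENNReal.ofReal (‖f i α‖ ^ 2) := by
      intro α
      rw [← ENNReal.ofReal_sum_of_nonneg (fun i _ => sq_nonneg _), hparseval α,
        ENNReal.ofReal_one]
    calc μ Set.univ = ∫⁻ _, (1 : ℝ≥0∞) ∂μ := lintegral_one.symm
    _ = ∫⁻ α, ∑ i, ENNReal.ofReal (‖f i α‖ ^ 2) ∂μ := lintegral_congr fun α => h1 α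
    _ = ∑ i, ∫⁻ α, ENNReal.ofReal (‖f i α‖ ^ 2) ∂μ :=
        lintegral_finset_sum _ (fun i _ => ((hf_meas i).norm.pow_const 2).ennreal_ofReal)
    _ ≤ ∑ i, ENNReal.ofReal (b * ‖e i‖ ^ 2) := Finset.sum_le_sum fun i _ => hbessel (e i)
    _ < ⊤ := ENNReal.sum_lt_top.2 fun i _ => ENNReal.ofReal_lt_top
  have key := welch_key μ d m f hf_meas hf_bd hparseval
  have hgeq : (fun p : Ω × Ω => ‖⟪τ p.1, τ p.2⟫_ℂ‖ ^ (2 * m))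
      = fun p : Ω × Ω => ‖∑ i, (starRingEnd ℂ) (f i p.1) * f i p.2‖ ^ (2 * m) :=
    funext fun p => by rw [hexp]
  rw [← hgeq] at key
  set D : Set (Ω × Ω) := {p : Ω × Ω | p.1 = p.2} with hD
  set S := sSup {x : ℝ | ∃ α β : Ω, α ≠ β ∧ x = ‖⟪τ α, τ β⟫_ℂ‖ ^ (2 * m)} with hS
  have hm1 : Measurable fun p : Ω × Ω => ⟪τ p.1, τ p.2⟫_ℂ := by
    have h0 : (fun p : Ω × Ω => ⟪τ p.1, τ p.2⟫_ℂ)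
        = fun p : Ω × Ω => ∑ i, (starRingEnd ℂ) (f i p.1) * f i p.2 :=
      funext fun p => hexp p.1 p.2
    rw [h0]
    exact Finset.measurable_sum _ fun i _ =>
      (Complex.continuous_conj.measurable.comp ((hf_meas i).comp measurable_fst)).mul
        ((hf_meas i).comp measurable_snd)
  have hg2_meas : AEStronglyMeasurable (fun p : Ω × Ω => ‖⟪τ p.1, τ p.2⟫_ℂ‖ ^ (2 * m))
      (μ.prod μ) := (hm1.norm.pow_const _).aestronglyMeasurable
  have hip_bd : ∀ p : Ω × Ω, ‖⟪τ p.1, τ p.2⟫_ℂ‖ ≤ 1 := by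
    intro p
    calc ‖⟪τ p.1, τ p.2⟫_ℂ‖ ≤ ‖τ p.1‖ * ‖τ p.2‖ := norm_inner_le_norm _ _
    _ = 1 := by rw [hnorm, hnorm, one_mul]
  have hg2_le1 : ∀ p : Ω × Ω, ‖⟪τ p.1, τ p.2⟫_ℂ‖ ^ (2 * m) ≤ 1 := fun p =>
    pow_le_one₀ (norm_nonneg _) (hip_bd p)
  have hg2_int : Integrable (fun p : Ω × Ω => ‖⟪τ p.1, τ p.2⟫_ℂ‖ ^ (2 * m)) (μ.prod μ) := by
    refine welch_bdd_integrable 1 hg2_meas fun p => ?_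
    rw [Real.norm_eq_abs, abs_of_nonneg (by positivity)]
    exact hg2_le1 p
  have hbdd : BddAbove {x : ℝ | ∃ α β : Ω, α ≠ β ∧ x = ‖⟪τ α, τ β⟫_ℂ‖ ^ (2 * m)} := by
    refine ⟨1, fun x hx => ?_⟩
    obtain ⟨α, β, _, rfl⟩ := hx
    exact hg2_le1 (α, β)
  have hSmem : ∀ p : Ω × Ω, p ∈ Dᶜ → ‖⟪τ p.1, τ p.2⟫_ℂ‖ ^ (2 * m) ≤ S :=
    fun p hp => le_csSup hbdd ⟨p.1, p.2, hp, rfl⟩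
  have hsplit := integral_add_compl hΔ hg2_int
  have hdiag : ∫ p in D, ‖⟪τ p.1, τ p.2⟫_ℂ‖ ^ (2 * m) ∂(μ.prod μ) = ((μ.prod μ) D).toReal := by
    have h1 : Set.EqOn (fun p : Ω × Ω => ‖⟪τ p.1, τ p.2⟫_ℂ‖ ^ (2 * m)) (fun _ => (1:ℝ)) D := by
      intro p hp
      have hp' : p.1 = p.2 := hp
      have h2 : ⟪τ p.2, τ p.2⟫_ℂ = 1 := by
        rw [inner_self_eq_norm_sq_to_K, hnorm]
        norm_num
      simp only [hp', h2]
      norm_num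
    rw [setIntegral_congr_fun hΔ h1, setIntegral_const, smul_eq_mul, mul_one, Measure.real]
  have hoffle : ∫ p in Dᶜ, ‖⟪τ p.1, τ p.2⟫_ℂ‖ ^ (2 * m) ∂(μ.prod μ)
      ≤ S * ((μ.prod μ) Dᶜ).toReal := by
    have h2 : ∫ p in Dᶜ, ‖⟪τ p.1, τ p.2⟫_ℂ‖ ^ (2 * m) ∂(μ.prod μ)
        ≤ ∫ _p in Dᶜ, S ∂(μ.prod μ) :=
      setIntegral_mono_on hg2_int.integrableOn
        (integrableOn_const (measure_ne_top _ _)) hΔ.compl hSmem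
    rw [setIntegral_const, smul_eq_mul, Measure.real] at h2
    linarith
  have hcpos : 0 < ((μ.prod μ) Dᶜ).toReal :=
    ENNReal.toReal_pos hoff.ne' (measure_ne_top _ _)
  have hNpos : 0 < ((d + m - 1).choose m : ℝ) := by
    have h : 0 < (d + m - 1).choose m := Nat.choose_pos (by omega)
    exact_mod_cast h
  rw [ge_iff_le, div_le_iff₀ hcpos]
  have h1 : (μ Set.univ).toReal ^ 2 / ((d + m - 1).choose m : ℝ)
      ≤ ∫ p : Ω × Ω, ‖⟪τ p.1, τ p.2⟫_ℂ‖ ^ (2 * m) ∂(μ.prod μ) := by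
    rw [div_le_iff₀ hNpos]
    linarith
  linarith
end

section
/- Let {τ_α}_{α∈Ω} be a normalized continuous Bessel family for a d-dimensional Hilbert space H with measurable diagonal Δ. Then the continuous frame potential FP := ∫_Ω ∫_Ω |⟨τ_α, τ_β⟩|² dμ(α) dμ(β) satisfies max{μ(Ω)²/d, (μ×μ)(Δ)} ≤ FP ≤ μ(Ω)². -/
open MeasureTheory
open scoped InnerProductSpace ENNReal

/-- Bounds on the continuous frame potential:
`max{μ(Ω)²/d, (μ×μ)(Δ)} ≤ FP ≤ μ(Ω)²`. -/
theorem stmt_19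
    {Ω : Type*} [MeasurableSpace Ω] (μ : Measure Ω)
    {H : Type*} [NormedAddCommGroup H] [InnerProductSpace ℂ H] [FiniteDimensional ℂ H]
    (hd : 0 < Module.finrank ℂ H)
    (τ : Ω → H) (b : ℝ) (hb : 0 < b)
    (hmeas : ∀ h : H, Measurable fun α => ⟪h, τ α⟫_ℂ)
    (hbessel : ∀ h : H,
      ∫⁻ α, ENNReal.ofReal (‖⟪h, τ α⟫_ℂ‖ ^ 2) ∂μ ≤ ENNReal.ofReal (b * ‖h‖ ^ 2))
    (hnorm : ∀ α, ‖τ α‖ = 1)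
    (hΔ : MeasurableSet {p : Ω × Ω | p.1 = p.2}) :
    max ((μ Set.univ).toReal ^ 2 / (Module.finrank ℂ H : ℝ))
        (((μ.prod μ) {p : Ω × Ω | p.1 = p.2}).toReal)
      ≤ ∫ α, ∫ β, ‖⟪τ α, τ β⟫_ℂ‖ ^ 2 ∂μ ∂μ
    ∧ ∫ α, ∫ β, ‖⟪τ α, τ β⟫_ℂ‖ ^ 2 ∂μ ∂μ ≤ (μ Set.univ).toReal ^ 2 := by
  classical
  set d := Module.finrank ℂ H with hdd
  let e : OrthonormalBasis (Fin d) ℂ H := stdOrthonormalBasis ℂ H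
  set c : Ω → Fin d → ℂ := fun α i => ⟪e i, τ α⟫_ℂ with hc
  have hcmeas : ∀ i, Measurable fun α => c α i := fun i => hmeas (e i)
  have hcbound : ∀ α i, ‖c α i‖ ≤ 1 := by
    intro α i
    calc ‖c α i‖ ≤ ‖e i‖ * ‖τ α‖ := norm_inner_le_norm _ _
      _ = 1 := by rw [hnorm α, e.orthonormal.1 i, one_mul]
  have hsum1 : ∀ α, ∑ i, ‖c α i‖ ^ 2 = 1 := by
    intro α
    have h2 : ∑ i, ‖⟪e i, τ α⟫_ℂ‖ ^ 2 = ‖τ α‖ ^ 2 := by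
      simp_rw [← e.repr_apply_apply]
      have h : ‖e.repr (τ α)‖ = ‖τ α‖ := e.repr.norm_map (τ α)
      rw [EuclideanSpace.norm_eq] at h
      rw [← h, Real.sq_sqrt (Finset.sum_nonneg fun i _ => sq_nonneg _)]
    rw [hc]; rw [h2, hnorm α, one_pow]
  -- finiteness of μ
  have hμfin : μ Set.univ ≠ ⊤ := by
    have key : μ Set.univ ≤ (d : ℝ≥0∞) * ENNReal.ofReal b := by
      have h1 : μ Set.univ = ∫⁻ α, ∑ i, ENNReal.ofReal (‖c α i‖ ^ 2) ∂μ := by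
        rw [← lintegral_one]
        congr 1
        ext α
        rw [← ENNReal.ofReal_sum_of_nonneg (fun i _ => by positivity), hsum1 α,
          ENNReal.ofReal_one]
      rw [h1, lintegral_finset_sum _ (fun i _ => ((hcmeas i).norm.pow_const 2).ennreal_ofReal)]
      calc ∑ i, ∫⁻ α, ENNReal.ofReal (‖c α i‖ ^ 2) ∂μ
          ≤ ∑ _i : Fin d, ENNReal.ofReal b := by
            refine Finset.sum_le_sum fun i _ => (hbessel (e i)).trans_eq ?_
            rw [e.orthonormal.1 i, one_pow, mul_one]
        _ = (d : ℝ≥0∞) * ENNReal.ofReal b := by simp [Finset.sum_const]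
    exact ne_top_of_le_ne_top (by finiteness) key
  haveI : IsFiniteMeasure μ := ⟨lt_top_iff_ne_top.2 hμfin⟩
  set m : ℝ := (μ Set.univ).toReal with hm
  have hm0 : 0 ≤ m := ENNReal.toReal_nonneg
  -- basic facts about the integrand
  have hFb : ∀ α β, ‖⟪τ α, τ β⟫_ℂ‖ ≤ 1 := by
    intro α β
    calc ‖⟪τ α, τ β⟫_ℂ‖ ≤ ‖τ α‖ * ‖τ β‖ := norm_inner_le_norm _ _
      _ = 1 := by rw [hnorm α, hnorm β, one_mul]
  have hfmeasβ : ∀ α, Measurable fun β => ‖⟪τ α, τ β⟫_ℂ‖ ^ 2 :=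
    fun α => (hmeas (τ α)).norm.pow_const 2
  have hfintβ : ∀ α, Integrable (fun β => ‖⟪τ α, τ β⟫_ℂ‖ ^ 2) μ := by
    intro α
    refine (integrable_const (1 : ℝ)).mono' (hfmeasβ α).aestronglyMeasurable ?_
    refine Filter.Eventually.of_forall fun β => ?_
    rw [Real.norm_eq_abs, abs_of_nonneg (sq_nonneg _)]
    calc ‖⟪τ α, τ β⟫_ℂ‖ ^ 2 ≤ 1 ^ 2 := pow_le_pow_left₀ (norm_nonneg _) (hFb α β) 2
      _ = 1 := one_pow 2
  have hinner_nonneg : ∀ α, 0 ≤ ∫ β, ‖⟪τ α, τ β⟫_ℂ‖ ^ 2 ∂μ :=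
    fun α => integral_nonneg fun β => sq_nonneg _
  have hinner_le : ∀ α, ∫ β, ‖⟪τ α, τ β⟫_ℂ‖ ^ 2 ∂μ ≤ m := by
    intro α
    have h := norm_integral_le_of_norm_le_const (μ := μ)
      (f := fun β => ‖⟪τ α, τ β⟫_ℂ‖ ^ 2) (C := 1) ?_
    · calc ∫ β, ‖⟪τ α, τ β⟫_ℂ‖ ^ 2 ∂μ ≤ ‖∫ β, ‖⟪τ α, τ β⟫_ℂ‖ ^ 2 ∂μ‖ := le_abs_self _
        _ ≤ 1 * m := h
        _ = m := one_mul m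
    · refine Filter.Eventually.of_forall fun β => ?_
      rw [Real.norm_eq_abs, abs_of_nonneg (sq_nonneg _)]
      calc ‖⟪τ α, τ β⟫_ℂ‖ ^ 2 ≤ 1 ^ 2 := pow_le_pow_left₀ (norm_nonneg _) (hFb α β) 2
        _ = 1 := one_pow 2
  -- upper bound
  have hupper : ∫ α, ∫ β, ‖⟪τ α, τ β⟫_ℂ‖ ^ 2 ∂μ ∂μ ≤ m ^ 2 := by
    have h := norm_integral_le_of_norm_le_const (μ := μ)
      (f := fun α => ∫ β, ‖⟪τ α, τ β⟫_ℂ‖ ^ 2 ∂μ) (C := m) ?_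
    · calc ∫ α, ∫ β, ‖⟪τ α, τ β⟫_ℂ‖ ^ 2 ∂μ ∂μ
          ≤ ‖∫ α, ∫ β, ‖⟪τ α, τ β⟫_ℂ‖ ^ 2 ∂μ ∂μ‖ := le_abs_self _
        _ ≤ m * m := h
        _ = m ^ 2 := (sq m).symm
    · refine Filter.Eventually.of_forall fun α => ?_
      rw [Real.norm_eq_abs, abs_of_nonneg (hinner_nonneg α)]
      exact hinner_le α
  -- diagonal lower bound
  -- joint measurability
  have hstar : ∀ (g : Ω → ℂ), Measurable g → Measurable fun α => (starRingEnd ℂ) (g α) := by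
    intro g hg
    simp_rw [starRingEnd_apply]
    exact continuous_star.measurable.comp hg
  have hFexp : ∀ α β, ⟪τ α, τ β⟫_ℂ = ∑ i, (starRingEnd ℂ) (c α i) * c β i := by
    intro α β
    rw [← e.sum_inner_mul_inner (τ α) (τ β)]
    refine Finset.sum_congr rfl fun i _ => ?_
    rw [← inner_conj_symm (τ α) (e i)]
  have hFjoint : Measurable fun p : Ω × Ω => ⟪τ p.1, τ p.2⟫_ℂ := by
    simp_rw [fun p : Ω × Ω => hFexp p.1 p.2]
    exact Finset.measurable_sum _ fun i _ =>
      ((hstar _ (hcmeas i)).comp measurable_fst).mul ((hcmeas i).comp measurable_snd)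
  have hgmeas : StronglyMeasurable fun α => ∫ β, ‖⟪τ α, τ β⟫_ℂ‖ ^ 2 ∂μ :=
    StronglyMeasurable.integral_prod_right'
      (f := fun p : Ω × Ω => ‖⟪τ p.1, τ p.2⟫_ℂ‖ ^ 2)
      ((hFjoint.norm.pow_const 2).stronglyMeasurable)
  have hgint : Integrable (fun α => ∫ β, ‖⟪τ α, τ β⟫_ℂ‖ ^ 2 ∂μ) μ := by
    refine (integrable_const m).mono' hgmeas.aestronglyMeasurable ?_
    refine Filter.Eventually.of_forall fun α => ?_
    rw [Real.norm_eq_abs, abs_of_nonneg (hinner_nonneg α)]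
    exact hinner_le α
  have hsing : ∀ α : Ω, MeasurableSet ({α} : Set Ω) := by
    intro α
    have h : MeasurableSet (Prod.mk α ⁻¹' {p : Ω × Ω | p.1 = p.2}) :=
      measurable_prodMk_left hΔ
    convert h using 1
    ext β
    simp [eq_comm]
  have hpre : ∀ α : Ω, Prod.mk α ⁻¹' {p : Ω × Ω | p.1 = p.2} = {α} := by
    intro α; ext β; simp [eq_comm]
  have hdiag : ((μ.prod μ) {p : Ω × Ω | p.1 = p.2}).toReal
      ≤ ∫ α, ∫ β, ‖⟪τ α, τ β⟫_ℂ‖ ^ 2 ∂μ ∂μ := by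
    have hμsing : Measurable fun α => μ {α} := by
      have := measurable_measure_prodMk_left (ν := μ) hΔ
      simpa only [hpre] using this
    have hprod : ((μ.prod μ) {p : Ω × Ω | p.1 = p.2}).toReal
        = ∫ α, (μ {α}).toReal ∂μ := by
      rw [Measure.prod_apply hΔ]
      simp_rw [hpre]
      exact (integral_toReal hμsing.aemeasurable
        (Filter.Eventually.of_forall fun α => measure_lt_top μ _)).symm
    have hlow : ∀ α, (μ {α}).toReal ≤ ∫ β, ‖⟪τ α, τ β⟫_ℂ‖ ^ 2 ∂μ := by
      intro α
      have hind : Integrable (Set.indicator {α} (fun _ => (1 : ℝ))) μ :=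
        (integrable_const 1).indicator (hsing α)
      have hle : ∀ β, Set.indicator {α} (fun _ => (1 : ℝ)) β ≤ ‖⟪τ α, τ β⟫_ℂ‖ ^ 2 := by
        intro β
        by_cases hβ : β ∈ ({α} : Set Ω)
        · rw [Set.indicator_of_mem hβ]
          rcases Set.mem_singleton_iff.1 hβ with rfl
          rw [inner_self_eq_norm_sq_to_K, hnorm]
          norm_num
        · rw [Set.indicator_of_notMem hβ]; exact sq_nonneg _
      have h := integral_mono hind (hfintβ α) hle
      rwa [integral_indicator_const (1 : ℝ) (hsing α), smul_eq_mul, mul_one] at h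
    rw [hprod]
    refine integral_mono ?_ hgint hlow
    refine (integrable_const m).mono' hμsing.ennreal_toReal.aestronglyMeasurable ?_
    refine Filter.Eventually.of_forall fun α => ?_
    rw [Real.norm_eq_abs, abs_of_nonneg ENNReal.toReal_nonneg]
    exact ENNReal.toReal_mono hμfin (measure_mono (Set.subset_univ _))
  -- finrank lower bound
  have hrank : m ^ 2 / (d : ℝ) ≤ ∫ α, ∫ β, ‖⟪τ α, τ β⟫_ℂ‖ ^ 2 ∂μ ∂μ := by
    set P : Fin d → Fin d → ℂ := fun i j => ∫ β, c β i * (starRingEnd ℂ) (c β j) ∂μ with hP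
    have hintC : ∀ (g : Ω → ℂ), Measurable g → (∀ x, ‖g x‖ ≤ 1) → Integrable g μ :=
      fun g hg hbd => (integrable_const (1 : ℝ)).mono' hg.aestronglyMeasurable
        (Filter.Eventually.of_forall hbd)
    have hmeas_ij : ∀ i j : Fin d, Measurable fun β => c β i * (starRingEnd ℂ) (c β j) :=
      fun i j => (hcmeas i).mul (hstar _ (hcmeas j))
    have hbd_ij : ∀ (i j : Fin d) (β : Ω), ‖c β i * (starRingEnd ℂ) (c β j)‖ ≤ 1 := by
      intro i j β
      rw [norm_mul, RCLike.norm_conj]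
      exact mul_le_one₀ (hcbound β i) (norm_nonneg _) (hcbound β j)
    have hint_ij : ∀ i j : Fin d, Integrable (fun β => c β i * (starRingEnd ℂ) (c β j)) μ :=
      fun i j => hintC _ (hmeas_ij i j) (hbd_ij i j)
    have hznorm : ∀ z : ℂ, ‖z‖ ^ 2 = (z * (starRingEnd ℂ) z).re := by
      intro z
      rw [Complex.mul_conj]; simp [Complex.sq_norm]
    have hre2 : ∀ z : ℂ, z.re ^ 2 ≤ ‖z‖ ^ 2 := by
      intro z
      calc z.re ^ 2 = |z.re| ^ 2 := (sq_abs _).symm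
        _ ≤ ‖z‖ ^ 2 := by gcongr; exact Complex.abs_re_le_norm z
        _ = ‖z‖ ^ 2 := by rfl
    have hGexp : ∀ α β, ⟪τ α, τ β⟫_ℂ * (starRingEnd ℂ) ⟪τ α, τ β⟫_ℂ
        = ∑ i, ∑ j, ((starRingEnd ℂ) (c α i) * c α j)
            * (c β i * (starRingEnd ℂ) (c β j)) := by
      intro α β
      rw [hFexp α β, map_sum, Finset.sum_mul_sum]
      refine Finset.sum_congr rfl fun i _ => Finset.sum_congr rfl fun j _ => ?_
      simp only [map_mul, RingHomCompTriple.comp_apply, Complex.conj_conj,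
        RingHom.id_apply]
      ring
    have hinner_eq : ∀ α, ∫ β, ‖⟪τ α, τ β⟫_ℂ‖ ^ 2 ∂μ
        = (∑ i, ∑ j, ((starRingEnd ℂ) (c α i) * c α j) * P i j).re := by
      intro α
      have hGint : Integrable
          (fun β => ⟪τ α, τ β⟫_ℂ * (starRingEnd ℂ) ⟪τ α, τ β⟫_ℂ) μ := by
        refine hintC _ ((hmeas (τ α)).mul (hstar _ (hmeas (τ α)))) fun β => ?_
        rw [norm_mul, RCLike.norm_conj]
        exact mul_le_one₀ (hFb α β) (norm_nonneg _) (hFb α β)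
      calc ∫ β, ‖⟪τ α, τ β⟫_ℂ‖ ^ 2 ∂μ
          = ∫ β, (⟪τ α, τ β⟫_ℂ * (starRingEnd ℂ) ⟪τ α, τ β⟫_ℂ).re ∂μ := by
            simp_rw [hznorm]
        _ = (∫ β, ⟪τ α, τ β⟫_ℂ * (starRingEnd ℂ) ⟪τ α, τ β⟫_ℂ ∂μ).re := by
            rw [← Complex.reCLM_apply, ← Complex.reCLM.integral_comp_comm hGint]
            simp
        _ = (∑ i, ∑ j, ((starRingEnd ℂ) (c α i) * c α j) * P i j).re := by
            congr 1
            simp_rw [hGexp α]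
            rw [integral_finset_sum _ (fun i _ =>
              integrable_finset_sum _ (fun j _ => (hint_ij i j).const_mul _))]
            refine Finset.sum_congr rfl fun i _ => ?_
            rw [integral_finset_sum _ (fun j _ => (hint_ij i j).const_mul _)]
            exact Finset.sum_congr rfl fun j _ => integral_const_mul _ _
    have hconjP : ∀ i j : Fin d,
        ∫ α, (starRingEnd ℂ) (c α i) * c α j ∂μ = (starRingEnd ℂ) (P i j) := by
      intro i j
      have heq : (fun α => (starRingEnd ℂ) (c α i) * c α j)
          = fun α => (starRingEnd ℂ) (c α i * (starRingEnd ℂ) (c α j)) := by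
        funext α
        simp only [map_mul, Complex.conj_conj]
      rw [heq, integral_conj]
    have houter : ∫ α, ∫ β, ‖⟪τ α, τ β⟫_ℂ‖ ^ 2 ∂μ ∂μ = ∑ i, ∑ j, ‖P i j‖ ^ 2 := by
      calc ∫ α, ∫ β, ‖⟪τ α, τ β⟫_ℂ‖ ^ 2 ∂μ ∂μ
          = ∫ α, (∑ i, ∑ j, ((starRingEnd ℂ) (c α i) * c α j) * P i j).re ∂μ := by
            simp_rw [hinner_eq]
        _ = (∫ α, ∑ i, ∑ j, ((starRingEnd ℂ) (c α i) * c α j) * P i j ∂μ).re := by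
            have hint : Integrable
                (fun α => ∑ i, ∑ j, ((starRingEnd ℂ) (c α i) * c α j) * P i j) μ :=
              integrable_finset_sum _ (fun i _ => integrable_finset_sum _ (fun j _ =>
                (hintC (fun α => (starRingEnd ℂ) (c α i) * c α j) ((hstar _ (hcmeas i)).mul (hcmeas j)) fun α => by
                  rw [norm_mul, RCLike.norm_conj]
                  exact mul_le_one₀ (hcbound α i) (norm_nonneg _) (hcbound α j)).mul_const _))
            rw [← Complex.reCLM_apply, ← Complex.reCLM.integral_comp_comm hint]
            simp
        _ = (∑ i, ∑ j, (starRingEnd ℂ) (P i j) * P i j).re := by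
            congr 1
            rw [integral_finset_sum _ (fun i _ =>
              integrable_finset_sum _ (fun j _ =>
                (hintC (fun α => (starRingEnd ℂ) (c α i) * c α j) ((hstar _ (hcmeas i)).mul (hcmeas j)) fun α => by
                  rw [norm_mul, RCLike.norm_conj]
                  exact mul_le_one₀ (hcbound α i) (norm_nonneg _) (hcbound α j)).mul_const _))]
            refine Finset.sum_congr rfl fun i _ => ?_
            rw [integral_finset_sum _ (fun j _ =>
              (hintC (fun α => (starRingEnd ℂ) (c α i) * c α j) ((hstar _ (hcmeas i)).mul (hcmeas j)) fun α => by
                rw [norm_mul, RCLike.norm_conj]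
                exact mul_le_one₀ (hcbound α i) (norm_nonneg _) (hcbound α j)).mul_const _)]
            refine Finset.sum_congr rfl fun j _ => ?_
            rw [integral_mul_const, hconjP i j]
        _ = ∑ i, ∑ j, ‖P i j‖ ^ 2 := by
            rw [Complex.re_sum]
            refine Finset.sum_congr rfl fun i _ => ?_
            rw [Complex.re_sum]
            refine Finset.sum_congr rfl fun j _ => ?_
            rw [mul_comm, ← hznorm]
    have hPdiag : ∀ i : Fin d, (P i i).re = ∫ β, ‖c β i‖ ^ 2 ∂μ := by
      intro i
      rw [hP]
      rw [← Complex.reCLM_apply, ← Complex.reCLM.integral_comp_comm (hint_ij i i)]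
      simp only [Complex.reCLM_apply]
      exact integral_congr_ae (Filter.Eventually.of_forall fun β => (hznorm _).symm)
    have hintnorm : ∀ i : Fin d, Integrable (fun β => ‖c β i‖ ^ 2) μ := by
      intro i
      refine (integrable_const (1 : ℝ)).mono'
        ((hcmeas i).norm.pow_const 2).aestronglyMeasurable ?_
      refine Filter.Eventually.of_forall fun β => ?_
      rw [Real.norm_eq_abs, abs_of_nonneg (sq_nonneg _)]
      calc ‖c β i‖ ^ 2 ≤ 1 ^ 2 := pow_le_pow_left₀ (norm_nonneg _) (hcbound β i) 2
        _ = 1 := one_pow 2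
    have htrace : ∑ i, (P i i).re = m := by
      simp_rw [hPdiag]
      rw [← integral_finset_sum _ (fun i _ => hintnorm i)]
      simp_rw [hsum1]
      rw [integral_const, smul_eq_mul, mul_one]
      rfl
    rw [houter, div_le_iff₀ (by exact_mod_cast hd : (0 : ℝ) < (d : ℝ))]
    calc m ^ 2 = (∑ i, (P i i).re) ^ 2 := by rw [htrace]
      _ ≤ (Finset.univ.card (α := Fin d) : ℝ) * ∑ i, (P i i).re ^ 2 :=
          sq_sum_le_card_mul_sum_sq
      _ = (d : ℝ) * ∑ i, (P i i).re ^ 2 := by rw [Finset.card_univ, Fintype.card_fin]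
      _ ≤ (d : ℝ) * ∑ i, ‖P i i‖ ^ 2 :=
          mul_le_mul_of_nonneg_left
            (Finset.sum_le_sum fun i _ => hre2 _) (Nat.cast_nonneg d)
      _ ≤ (d : ℝ) * ∑ i, ∑ j, ‖P i j‖ ^ 2 :=
          mul_le_mul_of_nonneg_left
            (Finset.sum_le_sum fun i _ =>
              Finset.single_le_sum (f := fun j => ‖P i j‖ ^ 2)
                (fun j _ => sq_nonneg _) (Finset.mem_univ i)) (Nat.cast_nonneg d)
      _ = (∑ i, ∑ j, ‖P i j‖ ^ 2) * (d : ℝ) := mul_comm _ _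
  exact ⟨max_le hrank hdiag, hupper⟩
end
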